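/- Equality Z(W) = 1 - I(W) holds if and only if for every output y, either W(y|0)·W(y|1) = 0 or W(y|0) = W(y|1) (i.e., W is a binary erasure channel). -/

import Mathlib

open Real

noncomputable def binEnt (q : ℝ) : ℝ := -(q * Real.logb 2 q) - (1 - q) * Real.logb 2 (1 - q)

noncomputable def Bh (q : ℝ) : ℝ := 2 * Real.sqrt (q * (1 - q))

noncomputable def phi (u : ℝ) : ℝ := binEnt ((1 - Real.sqrt (1 - u ^ 2)) / 2)
variable {Y : Type*} [Fintype Y]

noncomputable def symCap (W : Fin 2 → Y → ℝ) : ℝ :=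
  ∑ y, ∑ x : Fin 2,
    (1/2) * W x y * Real.logb 2 (W x y / ((1/2) * W 0 y + (1/2) * W 1 y))

noncomputable def bhat (W : Fin 2 → Y → ℝ) : ℝ := ∑ y, Real.sqrt (W 0 y * W 1 y)

section AuxZI
open Set

noncomputable def fG (t : ℝ) : ℝ :=
  Real.log 2 * Real.sqrt (1 - t^2)
    + (1/2)*((1+t)*Real.log (1+t) + (1-t)*Real.log (1-t)) - Real.log 2

noncomputable def gG (t : ℝ) : ℝ :=
  Real.log 2 * (-t / Real.sqrt (1 - t^2)) + (1/2)*(Real.log (1+t) - Real.log (1-t))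

lemma sq_lt_one_of_mem {t : ℝ} (ht : t ∈ Ioo (-1:ℝ) 1) : 0 < 1 - t^2 := by
  nlinarith [ht.1, ht.2]

lemma hasDerivAt_fG {t : ℝ} (ht : t ∈ Ioo (-1:ℝ) 1) : HasDerivAt fG (gG t) t := by
  have h1 : (0:ℝ) < 1 - t^2 := sq_lt_one_of_mem ht
  have hs : Real.sqrt (1 - t^2) ≠ 0 := by positivity
  have h1t : (0:ℝ) < 1 + t := by linarith [ht.1]
  have h2t : (0:ℝ) < 1 - t := by linarith [ht.2]
  have hsqrt : HasDerivAt (fun t : ℝ => Real.sqrt (1 - t^2))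
      (1 / (2 * Real.sqrt (1 - t^2)) * (0 - 2*t)) t := by
    have hu : HasDerivAt (fun t : ℝ => 1 - t^2) (0 - 2*t) t := by
      simpa using ((hasDerivAt_pow 2 t).const_sub 1)
    exact (Real.hasDerivAt_sqrt h1.ne').comp t hu
  have hA : HasDerivAt (fun t : ℝ => (1+t)*Real.log (1+t))
      (1 * Real.log (1+t) + (1+t) * (1/(1+t) * 1)) t := by
    have hl : HasDerivAt (fun t : ℝ => Real.log (1+t)) (1/(1+t) * 1) t := by
      have : HasDerivAt (fun t : ℝ => 1 + t) 1 t := by simpa using (hasDerivAt_id t).const_add 1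
      exact ((Real.hasDerivAt_log h1t.ne').comp t this).congr_deriv (by rw [one_div])
    exact ((hasDerivAt_id t).const_add 1).mul hl
  have hB : HasDerivAt (fun t : ℝ => (1-t)*Real.log (1-t))
      ((-1) * Real.log (1-t) + (1-t) * (1/(1-t) * (-1))) t := by
    have hl : HasDerivAt (fun t : ℝ => Real.log (1-t)) (1/(1-t) * (-1)) t := by
      have : HasDerivAt (fun t : ℝ => 1 - t) (-1) t := by
        simpa using ((hasDerivAt_id t).const_sub 1)
      exact ((Real.hasDerivAt_log h2t.ne').comp t this).congr_deriv (by rw [one_div])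
    exact (((hasDerivAt_id t).const_sub 1)).mul hl
  have := ((hsqrt.const_mul (Real.log 2)).add (((hA.add hB)).const_mul (1/2))).sub_const (Real.log 2)
  refine this.congr_deriv (Eq.symm ?_)
  rw [gG]
  field_simp
  ring

noncomputable def g2 (t : ℝ) : ℝ :=
  (Real.sqrt (1 - t^2) - Real.log 2) / Real.sqrt (1 - t^2) ^ 3

lemma hasDerivAt_gG {t : ℝ} (ht : t ∈ Ioo (-1:ℝ) 1) : HasDerivAt gG (g2 t) t := by
  have h1 : (0:ℝ) < 1 - t^2 := sq_lt_one_of_mem ht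
  have hsp : 0 < Real.sqrt (1 - t^2) := Real.sqrt_pos.2 h1
  have hs : Real.sqrt (1 - t^2) ≠ 0 := hsp.ne'
  have h1t : (0:ℝ) < 1 + t := by linarith [ht.1]
  have h2t : (0:ℝ) < 1 - t := by linarith [ht.2]
  have hsqrt : HasDerivAt (fun t : ℝ => Real.sqrt (1 - t^2))
      (1 / (2 * Real.sqrt (1 - t^2)) * (0 - 2*t)) t := by
    have hu : HasDerivAt (fun t : ℝ => 1 - t^2) (0 - 2*t) t := by
      simpa using ((hasDerivAt_pow 2 t).const_sub 1)
    exact (Real.hasDerivAt_sqrt h1.ne').comp t hu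
  have hdiv : HasDerivAt (fun t : ℝ => -t / Real.sqrt (1 - t^2))
      (((-1) * Real.sqrt (1 - t^2) - (-t) * (1 / (2 * Real.sqrt (1 - t^2)) * (0 - 2*t)))
        / (Real.sqrt (1 - t^2))^2) t := by
    exact ((hasDerivAt_id t).neg.congr_deriv (by ring)).div hsqrt hs
  have hl1 : HasDerivAt (fun t : ℝ => Real.log (1+t)) (1/(1+t) * 1) t := by
    have : HasDerivAt (fun t : ℝ => 1 + t) 1 t := by simpa using (hasDerivAt_id t).const_add 1
    exact ((Real.hasDerivAt_log h1t.ne').comp t this).congr_deriv (by rw [one_div])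
  have hl2 : HasDerivAt (fun t : ℝ => Real.log (1-t)) (1/(1-t) * (-1)) t := by
    have : HasDerivAt (fun t : ℝ => 1 - t) (-1) t := by
      simpa using ((hasDerivAt_id t).const_sub 1)
    exact ((Real.hasDerivAt_log h2t.ne').comp t this).congr_deriv (by rw [one_div])
  have hsum := (hdiv.const_mul (Real.log 2)).add ((hl1.sub hl2).const_mul (1/2))
  refine hsum.congr_deriv (Eq.symm ?_)
  have hsq : Real.sqrt (1 - t^2) ^ 2 = 1 - t^2 := Real.sq_sqrt h1.le
  rw [g2]
  field_simp
  linear_combination (-2*Real.sqrt (1-t^2) + 2*Real.log 2*(1-t^2)) * hsq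

lemma fG_cont : Continuous fG := by
  have h1 : Continuous fun t : ℝ => (1+t) * Real.log (1+t) :=
    Real.continuous_mul_log.comp (continuous_const.add continuous_id)
  have h2 : Continuous fun t : ℝ => (1-t) * Real.log (1-t) :=
    Real.continuous_mul_log.comp (continuous_const.sub continuous_id)
  have h3 : Continuous fun t : ℝ => Real.sqrt (1 - t^2) :=
    Real.continuous_sqrt.comp (continuous_const.sub (continuous_pow 2))
  unfold fG
  fun_prop

lemma fG_zero : fG 0 = 0 := by simp [fG]

lemma fG_one : fG 1 = 0 := by
  simp [fG]
  ring_nf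

noncomputable def t₀ : ℝ := Real.sqrt (1 - Real.log 2 ^ 2)

lemma log2_pos : (0:ℝ) < Real.log 2 := Real.log_pos (by norm_num)

lemma log2_lt_one : Real.log 2 < 1 := by
  have := Real.log_lt_sub_one_of_pos (x := 2) (by norm_num) (by norm_num)
  linarith

lemma t₀_mem : t₀ ∈ Ioo (0:ℝ) 1 := by
  constructor
  · apply Real.sqrt_pos.2; nlinarith [log2_pos, log2_lt_one]
  · rw [show (1:ℝ) = Real.sqrt 1 by simp]
    apply Real.sqrt_lt_sqrt (by nlinarith [log2_pos, log2_lt_one])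
    nlinarith [log2_pos]

lemma t₀_sq : t₀ ^ 2 = 1 - Real.log 2 ^ 2 :=
  Real.sq_sqrt (by nlinarith [log2_pos, log2_lt_one])

lemma g2_pos {t : ℝ} (ht : t ∈ Ioo (0:ℝ) t₀) : 0 < g2 t := by
  have h1 : t ^ 2 < t₀ ^ 2 := by nlinarith [ht.1, ht.2]
  rw [t₀_sq] at h1
  have h2 : Real.log 2 ^ 2 < 1 - t ^ 2 := by linarith
  have h3 : (0:ℝ) < 1 - t^2 := by nlinarith [log2_pos]
  have h4 : Real.log 2 < Real.sqrt (1 - t^2) := by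
    nlinarith [Real.sq_sqrt h3.le, Real.sqrt_nonneg (1-t^2), log2_pos]
  have h5 : 0 < Real.sqrt (1 - t^2) := Real.sqrt_pos.2 h3
  rw [g2]
  exact div_pos (by linarith) (by positivity)

lemma g2_neg {t : ℝ} (ht : t ∈ Ioo t₀ 1) : g2 t < 0 := by
  have h1 : t₀ ^ 2 < t ^ 2 := by nlinarith [ht.1, ht.2, t₀_mem.1]
  rw [t₀_sq] at h1
  have h3 : (0:ℝ) < 1 - t^2 := by nlinarith [ht.1, ht.2, t₀_mem.1]
  have h4 : Real.sqrt (1 - t^2) < Real.log 2 := by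
    nlinarith [Real.sq_sqrt h3.le, Real.sqrt_nonneg (1-t^2), log2_pos]
  have h5 : 0 < Real.sqrt (1 - t^2) := Real.sqrt_pos.2 h3
  rw [g2]
  apply div_neg_of_neg_of_pos (by linarith) (by positivity)

lemma gG_zero : gG 0 = 0 := by simp [gG]

lemma gG_cont : ContinuousOn gG (Icc 0 t₀) := by
  have hsub : Icc (0:ℝ) t₀ ⊆ Ioo (-1:ℝ) 1 := fun x hx =>
    ⟨by linarith [hx.1], lt_of_le_of_lt hx.2 t₀_mem.2⟩
  intro x hx
  exact (hasDerivAt_gG (hsub hx)).continuousAt.continuousWithinAt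

lemma gG_pos {t : ℝ} (ht : t ∈ Ioo (0:ℝ) t₀) : 0 < gG t := by
  have hmono : StrictMonoOn gG (Icc 0 t₀) := by
    apply strictMonoOn_of_deriv_pos (convex_Icc 0 t₀) gG_cont
    intro x hx
    rw [interior_Icc] at hx
    rw [(hasDerivAt_gG ⟨by linarith [hx.1], lt_trans hx.2 t₀_mem.2⟩).deriv]
    exact g2_pos hx
  have := hmono ⟨le_refl 0, t₀_mem.1.le⟩ ⟨ht.1.le, ht.2.le⟩ ht.1
  rwa [gG_zero] at this

lemma fG_pos_left {t : ℝ} (ht : t ∈ Ioc (0:ℝ) t₀) : 0 < fG t := by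
  have hmono : StrictMonoOn fG (Icc 0 t₀) := by
    apply strictMonoOn_of_deriv_pos (convex_Icc 0 t₀) fG_cont.continuousOn
    intro x hx
    rw [interior_Icc] at hx
    rw [(hasDerivAt_fG ⟨by linarith [hx.1], lt_trans hx.2 t₀_mem.2⟩).deriv]
    exact gG_pos hx
  have := hmono ⟨le_refl 0, t₀_mem.1.le⟩ ⟨ht.1.le, ht.2⟩ ht.1
  rwa [fG_zero] at this

lemma fG_concave : StrictConcaveOn ℝ (Icc t₀ 1) fG := by
  apply strictConcaveOn_of_deriv2_neg (convex_Icc t₀ 1) fG_cont.continuousOn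
  intro x hx
  rw [interior_Icc] at hx
  have hxm : x ∈ Ioo (-1:ℝ) 1 := ⟨by linarith [hx.1, t₀_mem.1], hx.2⟩
  have hev : deriv fG =ᶠ[nhds x] gG := by
    filter_upwards [IsOpen.mem_nhds isOpen_Ioo hxm] with y hy
    exact (hasDerivAt_fG hy).deriv
  have : deriv^[2] fG x = deriv gG x := by
    simp only [Function.iterate_succ, Function.iterate_zero, Function.comp_apply, id]
    exact Filter.EventuallyEq.deriv_eq hev
  rw [this, (hasDerivAt_gG hxm).deriv]
  exact g2_neg hx

lemma fG_pos {t : ℝ} (ht : t ∈ Ioo (0:ℝ) 1) : 0 < fG t := by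
  rcases le_or_gt t t₀ with h | h
  · exact fG_pos_left ⟨ht.1, h⟩
  · have ht0 : t₀ ∈ Icc t₀ 1 := ⟨le_refl _, t₀_mem.2.le⟩
    have h1 : (1:ℝ) ∈ Icc t₀ 1 := ⟨t₀_mem.2.le, le_refl _⟩
    set a : ℝ := (1 - t)/(1 - t₀) with ha
    have hapos : 0 < a := by
      apply div_pos <;> linarith [ht.2, t₀_mem.2]
    have h1t : (0:ℝ) < 1 - t₀ := by linarith [t₀_mem.2]
    have hbpos : 0 < 1 - a := by
      rw [ha, sub_pos, div_lt_one h1t]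
      linarith
    have hcomb : a * t₀ + (1 - a) * 1 = t := by
      rw [ha]
      field_simp
      ring
    have := fG_concave.2 ht0 h1 (by linarith [t₀_mem.2] : t₀ ≠ 1) hapos hbpos (by linarith)
    simp only [smul_eq_mul] at this
    rw [hcomb, fG_one] at this
    have hft : 0 < fG t₀ := fG_pos_left ⟨t₀_mem.1, le_refl _⟩
    nlinarith

lemma fG_even (t : ℝ) : fG (-t) = fG t := by
  have e1 : (1:ℝ) + -t = 1 - t := by ring
  have e2 : (1:ℝ) - -t = 1 + t := by ring
  have e3 : (-t)^2 = t^2 := by ring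
  rw [fG, fG, e1, e2, e3]
  ring

lemma fG_nonneg {t : ℝ} (ht : t ∈ Icc (-1:ℝ) 1) : 0 ≤ fG t := by
  have key : ∀ s : ℝ, s ∈ Icc (0:ℝ) 1 → 0 ≤ fG s := by
    intro s hs
    rcases eq_or_lt_of_le hs.1 with h | h
    · rw [← h, fG_zero]
    rcases eq_or_lt_of_le hs.2 with h2 | h2
    · rw [h2, fG_one]
    · exact (fG_pos ⟨h, h2⟩).le
  rcases le_or_gt 0 t with h | h
  · exact key t ⟨h, ht.2⟩
  · rw [← fG_even]
    exact key (-t) ⟨by linarith, by linarith [ht.1]⟩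

lemma fG_eq_zero {t : ℝ} (ht : t ∈ Ioo (-1:ℝ) 1) (h : fG t = 0) : t = 0 := by
  by_contra hne
  rcases lt_or_gt_of_ne hne with hlt | hgt
  · have : 0 < fG (-t) := fG_pos ⟨by linarith, by linarith [ht.1]⟩
    rw [fG_even] at this; linarith
  · have : 0 < fG t := fG_pos ⟨hgt, ht.2⟩; linarith

lemma pointwise (a b : ℝ) (ha : 0 ≤ a) (hb : 0 ≤ b) (hab : 0 < a + b) :
    0 ≤ Real.sqrt (a*b) + ((1/2)*a*Real.logb 2 (a/((1/2)*a+(1/2)*b))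
        + (1/2)*b*Real.logb 2 (b/((1/2)*a+(1/2)*b))) - ((1/2)*a+(1/2)*b)
    ∧ (Real.sqrt (a*b) + ((1/2)*a*Real.logb 2 (a/((1/2)*a+(1/2)*b))
        + (1/2)*b*Real.logb 2 (b/((1/2)*a+(1/2)*b))) - ((1/2)*a+(1/2)*b) = 0
      ↔ a*b = 0 ∨ a = b) := by
  rcases eq_or_lt_of_le ha with h0 | hapos
  · -- a = 0
    have hbpos : 0 < b := by linarith
    have h1 : b / ((1/2)*(0:ℝ) + (1/2)*b) = 2 := by
      field_simp
      ring
    rw [← h0, h1]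
    simp [Real.logb_self_eq_one (by norm_num : (1:ℝ) < 2)]
  rcases eq_or_lt_of_le hb with h0 | hbpos
  · -- b = 0
    have h1 : a / ((1/2)*a + (1/2)*(0:ℝ)) = 2 := by
      field_simp
      ring
    rw [← h0, h1]
    simp [Real.logb_self_eq_one (by norm_num : (1:ℝ) < 2)]
  · -- both positive
    set c : ℝ := (1/2)*a + (1/2)*b with hc
    have hcpos : 0 < c := by rw [hc]; linarith
    set t : ℝ := (a - b)/(a + b) with htd
    have htmem : t ∈ Ioo (-1:ℝ) 1 := by
      constructor
      · rw [htd, neg_lt, ← neg_div, div_lt_one hab]; linarith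
      · rw [htd, div_lt_one hab]; linarith
    have hA : a / c = 1 + t := by
      rw [hc, htd]; field_simp; ring
    have hB : b / c = 1 - t := by
      rw [hc, htd]; field_simp; ring
    have hac : a = c * (1 + t) := by
      field_simp at hA; linarith [hA]
    have hbc : b = c * (1 - t) := by
      field_simp at hB; linarith [hB]
    have hsqrt : Real.sqrt (a*b) = c * Real.sqrt (1 - t^2) := by
      have h1 : a * b = c^2 * (1 - t^2) := by rw [hac, hbc]; ring
      rw [h1, Real.sqrt_mul (sq_nonneg c), Real.sqrt_sq hcpos.le]
    have hE : Real.sqrt (a*b) + ((1/2)*a*Real.logb 2 (a/c)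
        + (1/2)*b*Real.logb 2 (b/c)) - c = (c / Real.log 2) * fG t := by
      rw [hsqrt, hA, hB, Real.logb, Real.logb, fG]
      have hl2 : Real.log 2 ≠ 0 := log2_pos.ne'
      field_simp
      rw [hac, hbc]
      ring
    rw [hE]
    have hcl : 0 < c / Real.log 2 := div_pos hcpos log2_pos
    constructor
    · exact mul_nonneg hcl.le (fG_nonneg ⟨htmem.1.le, htmem.2.le⟩)
    · constructor
      · intro h
        right
        have hf : fG t = 0 := by
          rcases mul_eq_zero.1 h with h' | h'
          · exact absurd h' hcl.ne'
          · exact h'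
        have := fG_eq_zero htmem hf
        rw [htd] at this
        have := div_eq_zero_iff.1 this
        rcases this with h' | h'
        · linarith
        · linarith
      · intro h
        rcases h with h | h
        · rcases mul_eq_zero.1 h with h' | h' <;> [linarith; linarith]
        · have ht0 : t = 0 := by rw [htd, h]; simp
          rw [ht0, fG_zero, mul_zero]

theorem Z_eq_one_sub_I_iff_BEC (W : Fin 2 → Y → ℝ)
    (hnn : ∀ x y, 0 ≤ W x y) (hsum : ∀ x, ∑ y, W x y = 1)
    (hpos : ∀ y, 0 < W 0 y + W 1 y) :
    bhat W = 1 - symCap W ↔ ∀ y, W 0 y * W 1 y = 0 ∨ W 0 y = W 1 y := by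
  classical
  set T : Y → ℝ := fun y =>
    Real.sqrt (W 0 y * W 1 y) + ((1/2)*W 0 y*Real.logb 2 (W 0 y/((1/2)*W 0 y+(1/2)*W 1 y))
      + (1/2)*W 1 y*Real.logb 2 (W 1 y/((1/2)*W 0 y+(1/2)*W 1 y))) - ((1/2)*W 0 y+(1/2)*W 1 y)
    with hT
  have hpt := fun y => pointwise (W 0 y) (W 1 y) (hnn 0 y) (hnn 1 y) (hpos y)
  have hTnn : ∀ y ∈ Finset.univ, 0 ≤ T y := fun y _ => (hpt y).1
  have hTiff : ∀ y, T y = 0 ↔ W 0 y * W 1 y = 0 ∨ W 0 y = W 1 y := fun y => (hpt y).2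
  have hsum_s : ∑ y, ((1/2)*W 0 y + (1/2)*W 1 y) = 1 := by
    rw [Finset.sum_add_distrib, ← Finset.mul_sum, ← Finset.mul_sum, hsum 0, hsum 1]
    norm_num
  have hsplit : ∑ y, T y = bhat W + symCap W - 1 := by
    have step : ∑ y, T y = (∑ y, Real.sqrt (W 0 y * W 1 y))
        + (∑ y, ∑ x : Fin 2,
            (1/2) * W x y * Real.logb 2 (W x y / ((1/2) * W 0 y + (1/2) * W 1 y)))
        - ∑ y, ((1/2)*W 0 y + (1/2)*W 1 y) := by
      rw [← Finset.sum_add_distrib, ← Finset.sum_sub_distrib]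
      apply Finset.sum_congr rfl
      intro y _
      rw [hT, Fin.sum_univ_two]
    rw [step, hsum_s, bhat, symCap]
  constructor
  · intro h
    have hz : ∑ y, T y = 0 := by rw [hsplit, h]; ring
    intro y
    exact (hTiff y).1 ((Finset.sum_eq_zero_iff_of_nonneg hTnn).1 hz y (Finset.mem_univ y))
  · intro h
    have hz : ∑ y, T y = 0 :=
      Finset.sum_eq_zero fun y _ => (hTiff y).2 (h y)
    rw [hsplit] at hz
    linarith

end AuxZI
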